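/- Let g be an invertible symmetric n×n real matrix and b a skew-symmetric n×n real matrix. Then det(g − b g⁻¹ b) · det(g) = det(g + b)². (Equivalently, the volume form of the metric g − b g⁻¹ b equals det(g+b)/det(g)^{1/2} up to sign.) -/

import Mathlib

open Matrix

/-- For `g` invertible symmetric and `b` skew-symmetric,
`det(g − b g⁻¹ b) · det g = det(g + b)²`; equivalently the volume form of the
metric `g − b g⁻¹ b` equals `det(g+b)/det(g)^{1/2}` up to sign. -/
theorem det_restricted_metric (n : ℕ) (g b : Matrix (Fin n) (Fin n) ℝ)
    (hg : IsUnit g.det) (hgsymm : gᵀ = g) (hbskew : bᵀ = -b) :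
    (g - b * g⁻¹ * b).det * g.det = (g + b).det ^ 2 := by
  have hgi : g * g⁻¹ = 1 := mul_nonsing_inv g hg
  have hig : g⁻¹ * g = 1 := nonsing_inv_mul g hg
  have h1 : g - b * g⁻¹ * b = (g + b) * g⁻¹ * (g - b) := by
    simp only [mul_sub, add_mul, hgi, one_mul, mul_assoc, hig, mul_one]
    abel
  have h2 : (g - b).det = (g + b).det := by
    rw [← det_transpose (g - b), transpose_sub, hgsymm, hbskew, sub_neg_eq_add]
  have hd : g.det ≠ 0 := hg.ne_zero
  rw [h1, det_mul, det_mul, det_nonsing_inv, Ring.inverse_eq_inv', h2]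
  field_simp
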